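/- Suppose each φ_i is convex with L-Lipschitz gradient, P(w) = (1/n)∑_i φ_i(w) + (λ/2)||w||^2, w* minimizes P, and α_i* = −∇φ_i(w*). Then (1/n)∑_{i=1}^n ||∇φ_i(y) + α_i*||^2 ≤ 2L^2 ||x − y||^2 + 4L (P(x) − P(w*) − (λ/2)||x − w*||^2) for any x, y ∈ R^d. -/

import Mathlib

open scoped RealInnerProductSpace

variable {E : Type*} [NormedAddCommGroup E] [InnerProductSpace ℝ E] [CompleteSpace E]

lemma aux_line_deriv (f : E → ℝ) (hf : Differentiable ℝ f) (u v : E) (t : ℝ) :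
    HasDerivAt (fun s : ℝ => f (u + s • v)) ⟪gradient f (u + t • v), v⟫ t := by
  have hγ : HasDerivAt (fun s : ℝ => u + s • v) v t := by
    simpa using ((hasDerivAt_id t).smul_const v).const_add u
  have hF : HasFDerivAt f (InnerProductSpace.toDual ℝ E (gradient f (u + t • v))) (u + t • v) :=
    hasGradientAt_iff_hasFDerivAt.mp (hf (u + t • v)).hasGradientAt
  have := hF.comp_hasDerivAt t hγ
  exact this.congr_deriv (by simp)

lemma aux_first_order (f : E → ℝ) (hconv : ConvexOn ℝ Set.univ f) (hf : Differentiable ℝ f)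
    (z w : E) : f z + ⟪gradient f z, w - z⟫ ≤ f w := by
  have hg : ConvexOn ℝ Set.univ (fun t : ℝ => f (z + t • (w - z))) := by
    have h := hconv.comp_affineMap (AffineMap.lineMap z w)
    simp only [Set.preimage_univ] at h
    refine h.congr (fun t _ => ?_)
    simp [AffineMap.lineMap_apply, add_comm]
  have hd : HasDerivAt (fun t : ℝ => f (z + t • (w - z))) ⟪gradient f z, w - z⟫ 0 := by
    simpa using aux_line_deriv f hf z (w - z) 0
  have := hg.le_slope_of_hasDerivAt (Set.mem_univ (0:ℝ)) (Set.mem_univ (1:ℝ)) one_pos hd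
  rw [slope_def_field] at this
  simp only [zero_smul, add_zero, one_smul, add_sub_cancel] at this
  simp only [div_one, sub_zero] at this
  linarith

lemma aux_descent (f : E → ℝ) (hf : Differentiable ℝ f) {L : ℝ} (hL : 0 ≤ L)
    (hLip : ∀ a b, ‖gradient f a - gradient f b‖ ≤ L * ‖a - b‖) (u v : E) :
    f v ≤ f u + ⟪gradient f u, v - u⟫ + L / 2 * ‖v - u‖ ^ 2 := by
  set w := v - u with hw
  set g' := fun s : ℝ => ⟪gradient f (u + s • w), w⟫ with hg'
  have hgradLip : LipschitzWith ⟨L, hL⟩ (gradient f) := by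
    apply LipschitzWith.of_dist_le_mul
    intro a b
    rw [dist_eq_norm, dist_eq_norm]; exact hLip a b
  have hcont : Continuous g' := by
    apply Continuous.inner _ continuous_const
    exact hgradLip.continuous.comp (by continuity)
  have hderiv : ∀ t ∈ Set.uIcc (0:ℝ) 1, HasDerivAt (fun s : ℝ => f (u + s • w)) (g' t) t :=
    fun t _ => aux_line_deriv f hf u w t
  have hFTC : ∫ s in (0:ℝ)..1, g' s = f v - f u := by
    have h := intervalIntegral.integral_eq_sub_of_hasDerivAt hderiv
      (hcont.intervalIntegrable 0 1)
    simpa [hw] using h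
  have hbound : ∀ s ∈ Set.Icc (0:ℝ) 1, g' s ≤ g' 0 + L * ‖w‖ ^ 2 * s := by
    intro s hs
    have h1 : g' s - g' 0 = ⟪gradient f (u + s • w) - gradient f (u + (0:ℝ) • w), w⟫ := by
      rw [inner_sub_left]
    have h2 : ⟪gradient f (u + s • w) - gradient f (u + (0:ℝ) • w), w⟫ ≤
        ‖gradient f (u + s • w) - gradient f (u + (0:ℝ) • w)‖ * ‖w‖ :=
      real_inner_le_norm _ _
    have h3 : ‖gradient f (u + s • w) - gradient f (u + (0:ℝ) • w)‖ ≤ L * (s * ‖w‖) := by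
      have := hLip (u + s • w) (u + (0:ℝ) • w)
      have he : ‖(u + s • w) - (u + (0:ℝ) • w)‖ = s * ‖w‖ := by
        simp [norm_smul, abs_of_nonneg hs.1]
      rwa [he] at this
    nlinarith [norm_nonneg w, hs.1, hs.2, norm_nonneg (gradient f (u + s • w) - gradient f (u + (0:ℝ) • w))]
  have hInt2 : ∫ s in (0:ℝ)..1, (g' 0 + L * ‖w‖ ^ 2 * s) = g' 0 + L * ‖w‖ ^ 2 / 2 := by
    rw [intervalIntegral.integral_add intervalIntegrable_const
      (intervalIntegral.intervalIntegrable_id.const_mul _),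
      intervalIntegral.integral_const_mul, integral_id]
    simp
    ring
  have hmono : ∫ s in (0:ℝ)..1, g' s ≤ ∫ s in (0:ℝ)..1, (g' 0 + L * ‖w‖ ^ 2 * s) := by
    apply intervalIntegral.integral_mono_on zero_le_one (hcont.intervalIntegrable 0 1)
      (intervalIntegrable_const.add (intervalIntegral.intervalIntegrable_id.const_mul _))
    exact hbound
  have hg'0 : g' 0 = ⟪gradient f u, v - u⟫ := by simp [hg', hw]
  rw [hFTC] at hmono
  rw [hInt2, hg'0] at hmono
  linarith

lemma aux_coco (f : E → ℝ) (hconv : ConvexOn ℝ Set.univ f) (hf : Differentiable ℝ f)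
    {L : ℝ} (hL : 0 < L)
    (hLip : ∀ a b, ‖gradient f a - gradient f b‖ ≤ L * ‖a - b‖) (u z : E) :
    ‖gradient f u - gradient f z‖ ^ 2 ≤ 2 * L * (f u - f z - ⟪gradient f z, u - z⟫) := by
  set g := gradient f u - gradient f z with hgdef
  set w := u - (1/L) • g with hwdef
  have h1 := aux_descent f hf hL.le hLip u w
  have h2 := aux_first_order f hconv hf z w
  have e1 : ⟪gradient f u, w - u⟫ = -(1/L) * ⟪gradient f u, g⟫ := by
    rw [hwdef, sub_sub_cancel_left, inner_neg_right, inner_smul_right]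
    ring
  have e2 : ‖w - u‖ ^ 2 = (1/L)^2 * ‖g‖ ^ 2 := by
    rw [hwdef, sub_sub_cancel_left, norm_neg, norm_smul, mul_pow, Real.norm_eq_abs, sq_abs]
  have e3 : ⟪gradient f z, w - z⟫ = ⟪gradient f z, u - z⟫ - (1/L) * ⟪gradient f z, g⟫ := by
    have : w - z = (u - z) - (1/L) • g := by rw [hwdef]; abel
    rw [this, inner_sub_right, inner_smul_right]
  have e4 : ⟪gradient f u, g⟫ - ⟪gradient f z, g⟫ = ‖g‖ ^ 2 := by
    rw [← inner_sub_left, ← hgdef, real_inner_self_eq_norm_sq]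
  rw [e1, e2] at h1
  rw [e3] at h2
  have hLne : L ≠ 0 := ne_of_gt hL
  have key : 1/(2*L) * ‖g‖^2 ≤ f u - f z - ⟪gradient f z, u - z⟫ := by
    have e5 : (1/L) * ⟪gradient f u, g⟫ - (1/L) * ⟪gradient f z, g⟫ = (1/L) * ‖g‖^2 := by
      rw [← mul_sub, e4]
    have e6 : L/2 * ((1/L)^2 * ‖g‖^2) = 1/(2*L) * ‖g‖^2 := by field_simp
    have e7 : (1/L) * ‖g‖^2 - 1/(2*L) * ‖g‖^2 = 1/(2*L) * ‖g‖^2 := by field_simp; ring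
    linarith
  calc ‖g‖^2 = (2*L) * (1/(2*L) * ‖g‖^2) := by field_simp
  _ ≤ 2*L*(f u - f z - ⟪gradient f z, u - z⟫) :=
      mul_le_mul_of_nonneg_left key (by positivity)

theorem stmt_6 {d n : ℕ} (hn : 0 < n) (φ : Fin n → EuclideanSpace ℝ (Fin d) → ℝ)
    (L lam : ℝ) (hlam : 0 < lam)
    (hconv : ∀ i, ConvexOn ℝ Set.univ (φ i))
    (hdiff : ∀ i, Differentiable ℝ (φ i))
    (hLip : ∀ i, ∀ x y, ‖gradient (φ i) x - gradient (φ i) y‖ ≤ L * ‖x - y‖)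
    (P : EuclideanSpace ℝ (Fin d) → ℝ)
    (hP : ∀ w, P w = (1 / (n : ℝ)) * ∑ i, φ i w + lam / 2 * ‖w‖ ^ 2)
    (wstar : EuclideanSpace ℝ (Fin d)) (hmin : ∀ w, P wstar ≤ P w)
    (αstar : Fin n → EuclideanSpace ℝ (Fin d))
    (hα : ∀ i, αstar i = -gradient (φ i) wstar)
    (x y : EuclideanSpace ℝ (Fin d)) :
    (1 / (n : ℝ)) * ∑ i, ‖gradient (φ i) y + αstar i‖ ^ 2 ≤
      2 * L ^ 2 * ‖x - y‖ ^ 2 +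
        4 * L * (P x - P wstar - lam / 2 * ‖x - wstar‖ ^ 2) := by
  have hn' : (0:ℝ) < n := Nat.cast_pos.mpr hn
  -- optimality condition along the segment from wstar to x
  have hopt : (1/(n:ℝ)) * ∑ i, ⟪gradient (φ i) wstar, x - wstar⟫ +
      lam * ⟪wstar, x - wstar⟫ = 0 := by
    set q := fun t : ℝ => (1/(n:ℝ)) * ∑ i, φ i (wstar + t • (x - wstar)) +
      lam/2 * (‖wstar‖^2 + 2*⟪wstar, x - wstar⟫*t + ‖x - wstar‖^2*t^2) with hq
    have hqP : ∀ t, q t = P (wstar + t • (x - wstar)) := by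
      intro t
      rw [hq, hP]
      have hns : ‖wstar + t • (x - wstar)‖ ^ 2 =
          ‖wstar‖^2 + 2*⟪wstar, x - wstar⟫*t + ‖x - wstar‖^2*t^2 := by
        rw [norm_add_sq_real, real_inner_smul_right, norm_smul, mul_pow,
          Real.norm_eq_abs, sq_abs]
        ring
      rw [hns]
    have hlm : IsLocalMin q 0 := by
      apply Filter.Eventually.of_forall
      intro t
      rw [hqP, hqP]
      simp only [zero_smul, add_zero]
      exact hmin _
    have hsum : HasDerivAt (fun t : ℝ => ∑ i, φ i (wstar + t • (x - wstar)))
        (∑ i, ⟪gradient (φ i) wstar, x - wstar⟫) 0 := by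
      apply HasDerivAt.fun_sum
      intro i _
      simpa using aux_line_deriv (φ i) (hdiff i) wstar (x - wstar) 0
    have hpoly : HasDerivAt (fun t : ℝ => lam/2 * (‖wstar‖^2 + 2*⟪wstar, x - wstar⟫*t +
        ‖x - wstar‖^2*t^2)) (lam * ⟪wstar, x - wstar⟫) 0 := by
      have ha : HasDerivAt (fun t : ℝ => 2*⟪wstar, x - wstar⟫*t)
          (2*⟪wstar, x - wstar⟫) 0 := by
        simpa using (hasDerivAt_id (0:ℝ)).const_mul (2*⟪wstar, x - wstar⟫)
      have hb : HasDerivAt (fun t : ℝ => ‖x - wstar‖^2*t^2) 0 0 := by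
        simpa using (hasDerivAt_pow 2 (0:ℝ)).const_mul (‖x - wstar‖^2)
      have h1 := ((hasDerivAt_const (0:ℝ) (‖wstar‖^2)).add ha).add hb
      have h2 := h1.const_mul (lam/2)
      exact h2.congr_deriv (by ring)
    have hq' : HasDerivAt q ((1/(n:ℝ)) * ∑ i, ⟪gradient (φ i) wstar, x - wstar⟫ +
        lam * ⟪wstar, x - wstar⟫) 0 := (hsum.const_mul (1/(n:ℝ))).add hpoly
    exact hlm.hasDerivAt_eq_zero hq'
  -- the key identity
  have kid : (1/(n:ℝ)) * ∑ i, (φ i x - φ i wstar - ⟪gradient (φ i) wstar, x - wstar⟫)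
      = P x - P wstar - lam/2 * ‖x - wstar‖^2 := by
    have hnorm : ‖x - wstar‖^2 = ‖x‖^2 - ‖wstar‖^2 - 2*⟪wstar, x - wstar⟫ := by
      rw [inner_sub_right, real_inner_self_eq_norm_sq, norm_sub_sq_real, real_inner_comm]
      ring
    rw [Finset.sum_sub_distrib, Finset.sum_sub_distrib, hP x, hP wstar, hnorm,
      mul_sub, mul_sub]
    linarith [hopt]
  rcases lt_or_ge 0 L with hL | hL
  · -- main case L > 0
    have hterm : ∀ i, ‖gradient (φ i) y + αstar i‖^2 ≤
        2*L^2*‖x - y‖^2 + 4*L*(φ i x - φ i wstar - ⟪gradient (φ i) wstar, x - wstar⟫) := by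
      intro i
      rw [hα i]
      have e : gradient (φ i) y + -gradient (φ i) wstar =
          (gradient (φ i) y - gradient (φ i) x) +
          (gradient (φ i) x - gradient (φ i) wstar) := by abel
      rw [e]
      have ha : ‖gradient (φ i) y - gradient (φ i) x‖ ≤ L * ‖x - y‖ := by
        have := hLip i y x
        rwa [norm_sub_rev y x] at this
      have ha2 : ‖gradient (φ i) y - gradient (φ i) x‖^2 ≤ L^2 * ‖x - y‖^2 := by
        calc ‖gradient (φ i) y - gradient (φ i) x‖^2 ≤ (L * ‖x - y‖)^2 :=
              pow_le_pow_left₀ (norm_nonneg _) ha 2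
        _ = L^2 * ‖x - y‖^2 := by ring
      have hb := aux_coco (φ i) (hconv i) (hdiff i) hL (hLip i) x wstar
      have htri : ‖(gradient (φ i) y - gradient (φ i) x) +
          (gradient (φ i) x - gradient (φ i) wstar)‖^2 ≤
          2*‖gradient (φ i) y - gradient (φ i) x‖^2 +
          2*‖gradient (φ i) x - gradient (φ i) wstar‖^2 := by
        have h := norm_add_le (gradient (φ i) y - gradient (φ i) x)
          (gradient (φ i) x - gradient (φ i) wstar)
        have hsq := pow_le_pow_left₀ (norm_nonneg ((gradient (φ i) y - gradient (φ i) x) +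
            (gradient (φ i) x - gradient (φ i) wstar))) h 2
        nlinarith [sq_nonneg (‖gradient (φ i) y - gradient (φ i) x‖ -
          ‖gradient (φ i) x - gradient (φ i) wstar‖)]
      linarith
    have hsum_le : ∑ i, ‖gradient (φ i) y + αstar i‖^2 ≤
        ∑ i, (2*L^2*‖x - y‖^2 +
          4*L*(φ i x - φ i wstar - ⟪gradient (φ i) wstar, x - wstar⟫)) :=
      Finset.sum_le_sum (fun i _ => hterm i)
    have hfinal := mul_le_mul_of_nonneg_left hsum_le (by positivity : (0:ℝ) ≤ 1/(n:ℝ))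
    have hrhs : (1/(n:ℝ)) * ∑ i, (2*L^2*‖x - y‖^2 +
        4*L*(φ i x - φ i wstar - ⟪gradient (φ i) wstar, x - wstar⟫)) =
        2*L^2*‖x - y‖^2 + 4*L*((1/(n:ℝ)) *
          ∑ i, (φ i x - φ i wstar - ⟪gradient (φ i) wstar, x - wstar⟫)) := by
      rw [Finset.sum_add_distrib, Finset.sum_const, Finset.card_univ, Fintype.card_fin,
        ← Finset.mul_sum, nsmul_eq_mul]
      field_simp
    calc (1 / (n : ℝ)) * ∑ i, ‖gradient (φ i) y + αstar i‖ ^ 2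
        ≤ (1/(n:ℝ)) * ∑ i, (2*L^2*‖x - y‖^2 +
          4*L*(φ i x - φ i wstar - ⟪gradient (φ i) wstar, x - wstar⟫)) := hfinal
      _ = 2*L^2*‖x - y‖^2 + 4*L*((1/(n:ℝ)) *
          ∑ i, (φ i x - φ i wstar - ⟪gradient (φ i) wstar, x - wstar⟫)) := hrhs
      _ = 2 * L ^ 2 * ‖x - y‖ ^ 2 +
          4 * L * (P x - P wstar - lam / 2 * ‖x - wstar‖ ^ 2) := by rw [kid]
  · -- degenerate case L ≤ 0 : all gradients are constant
    have hgeq : ∀ i (a b : EuclideanSpace ℝ (Fin d)),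
        gradient (φ i) a = gradient (φ i) b := by
      intro i a b
      have h := hLip i a b
      have h2 : L * ‖a - b‖ ≤ 0 := mul_nonpos_of_nonpos_of_nonneg hL (norm_nonneg _)
      have h3 : ‖gradient (φ i) a - gradient (φ i) b‖ = 0 :=
        le_antisymm (h.trans h2) (norm_nonneg _)
      exact sub_eq_zero.mp (norm_eq_zero.mp h3)
    have hLHS : ∑ i, ‖gradient (φ i) y + αstar i‖^2 = 0 := by
      apply Finset.sum_eq_zero
      intro i _
      rw [hα i, hgeq i y wstar]
      simp
    have hB : ∀ i, φ i x - φ i wstar - ⟪gradient (φ i) wstar, x - wstar⟫ = 0 := by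
      intro i
      have h1 := aux_first_order (φ i) (hconv i) (hdiff i) wstar x
      have h2 := aux_first_order (φ i) (hconv i) (hdiff i) x wstar
      rw [hgeq i x wstar] at h2
      have e : ⟪gradient (φ i) wstar, wstar - x⟫ =
          -⟪gradient (φ i) wstar, x - wstar⟫ := by
        rw [← inner_neg_right, neg_sub]
      rw [e] at h2
      linarith
    have hsumB : ∑ i, (φ i x - φ i wstar - ⟪gradient (φ i) wstar, x - wstar⟫) = 0 :=
      Finset.sum_eq_zero (fun i _ => hB i)
    have hPx : P x - P wstar - lam/2 * ‖x - wstar‖^2 = 0 := by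
      rw [← kid, hsumB, mul_zero]
    rw [hLHS, mul_zero, hPx, mul_zero, add_zero]
    positivity
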